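/- Let $c_1, \dots, c_s$ be distinct real numbers with Lagrange basis polynomials $\ell_i$ and weights $b_i = \int_0^1 \ell_i(\tau)\,d\tau \neq 0$. Let $S \in \mathbb{R}^{N\times N}$ be skew-symmetric and $H : \mathbb{R}^N \to \mathbb{R}$ continuously differentiable. Let $D : \mathbb{R} \to \mathbb{R}^{N\times N}$ be a continuous diagonal-matrix-valued function and set $Y(t) = \int_{t_0 + h/2}^{t} D(s)\,ds$. Let $\eta : \mathbb{R} \to \mathbb{R}$ be continuous with $\phi(t) = \int_{t_0+h/2}^{t} \eta(s)\,ds$, and assume the energy constraint $H(e^{Y(t)} y) = e^{\phi(t)} H(y)$ holds for all $y \in \mathbb{R}^N$ at $t = t_0$ and $t = t_0 + h$. Suppose $v : \mathbb{R} \to \mathbb{R}^N$ is a polynomial map of degree at most $s$ with $v(t_0) = e^{Y(t_0)} x_0$ satisfying the collocation conditions $\dot{v}(t_0 + c_i h) = \frac{1}{b_i}\int_0^1 \ell_i(\tau)\, S\,\nabla H(v(t_0+\tau h))\,d\tau$, and set $x_1 = e^{-Y(t_0+h)} v(t_0 + h)$. Then $H(x_1) = e^{\phi(t_0) - \phi(t_0+h)}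 H(x_0)$, i.e., the exponential energy-preserving collocation method preserves the exact energy dissipation rate. -/

import Mathlib

open Matrix MeasureTheory

private lemma intervalIntegral_pi_apply {n : ℕ} {f : ℝ → Fin n → ℝ} {a b : ℝ}
    (hf : IntervalIntegrable f volume a b) (k : Fin n) :
    (∫ τ in a..b, f τ) k = ∫ τ in a..b, f τ k :=
  ((ContinuousLinearMap.proj (R := ℝ) (φ := fun _ : Fin n => ℝ) k).intervalIntegral_comp_comm
    hf).symm

private lemma skew_dot {n : ℕ} {S : Matrix (Fin n) (Fin n) ℝ} (hS : Sᵀ = -S)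
    (x : Fin n → ℝ) : x ⬝ᵥ S.mulVec x = 0 := by
  have h1 : x ⬝ᵥ S.mulVec x = S.vecMul x ⬝ᵥ x := Matrix.dotProduct_mulVec x S x
  have h2 : S.vecMul x = -(S.mulVec x) := by
    rw [← Matrix.mulVec_transpose, hS, Matrix.neg_mulVec]
  rw [h2, neg_dotProduct, dotProduct_comm] at h1
  have h3 : S.mulVec x ⬝ᵥ x = 0 := by linarith
  rw [dotProduct_comm]
  exact h3

theorem exponential_energy_preserving_collocation_dissipation
    {N s : ℕ}
    (c : Fin s → ℝ) (hc : Function.Injective c)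
    (ℓ : Fin s → ℝ → ℝ)
    (hℓ : ∀ i τ, ℓ i τ = ∏ j ∈ Finset.univ.erase i, (τ - c j) / (c i - c j))
    (b : Fin s → ℝ) (hb : ∀ i, b i = ∫ τ in (0:ℝ)..1, ℓ i τ)
    (hbne : ∀ i, b i ≠ 0)
    (S : Matrix (Fin N) (Fin N) ℝ) (hS : Sᵀ = -S)
    (H : (Fin N → ℝ) → ℝ) (gradH : (Fin N → ℝ) → (Fin N → ℝ))
    (hH : ContDiff ℝ 1 H)
    (hgradH : ∀ y w, (fderiv ℝ H y) w = dotProduct (gradH y) w)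
    (t₀ h : ℝ)
    (d : ℝ → (Fin N → ℝ)) (hd : Continuous d)
    (Y : ℝ → (Fin N → ℝ)) (hY : ∀ t, Y t = ∫ u in (t₀ + h/2)..t, d u)
    (η : ℝ → ℝ) (hη : Continuous η)
    (φ : ℝ → ℝ) (hφ : ∀ t, φ t = ∫ u in (t₀ + h/2)..t, η u)
    (hconstraint : ∀ t ∈ ({t₀, t₀ + h} : Set ℝ), ∀ y : Fin N → ℝ,
      H ((Matrix.diagonal (fun k => Real.exp (Y t k))).mulVec y) = Real.exp (φ t) * H y)
    (x₀ x₁ : Fin N → ℝ)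
    (v : ℝ → (Fin N → ℝ))
    (hv : ∀ k, ∃ p : Polynomial ℝ, p.natDegree ≤ s ∧ ∀ t, v t k = p.eval t)
    (hv0 : v t₀ = (Matrix.diagonal (fun k => Real.exp (Y t₀ k))).mulVec x₀)
    (hcoll : ∀ i, HasDerivAt v
      ((b i)⁻¹ • ∫ τ in (0:ℝ)..1, ℓ i τ • S.mulVec (gradH (v (t₀ + τ * h))))
      (t₀ + c i * h))
    (hx1 : x₁ = (Matrix.diagonal (fun k => Real.exp (-(Y (t₀ + h) k)))).mulVec (v (t₀ + h))) :
    H x₁ = Real.exp (φ t₀ - φ (t₀ + h)) * H x₀ := by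
  classical
  choose P hPdeg hPeval using hv
  -- the reparametrized polynomial and its derivative
  set W : Fin N → Polynomial ℝ :=
    fun k => (P k).comp (Polynomial.C t₀ + Polynomial.C h * Polynomial.X) with hW
  set R : Fin N → Polynomial ℝ := fun k => (W k).derivative with hRdef
  have hWeval : ∀ k τ, (W k).eval τ = v (t₀ + τ * h) k := by
    intro k τ
    rw [hPeval k]
    simp only [hW, Polynomial.eval_comp, Polynomial.eval_add, Polynomial.eval_mul,
      Polynomial.eval_C, Polynomial.eval_X]
    rw [mul_comm h τ]
  -- continuity of v
  have hvcont : Continuous v := by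
    apply continuous_pi
    intro k
    have : (fun t => v t k) = fun t => (P k).eval t := funext (hPeval k)
    rw [this]; exact (P k).continuous
  -- gradH is continuous
  have hgrad_eq : ∀ y, gradH y = fun k => (fderiv ℝ H y) (Pi.single k 1) := by
    intro y; funext k
    rw [hgradH]
    simp [dotProduct_single]
  have hfdcont : Continuous (fun y => fderiv ℝ H y) := hH.continuous_fderiv one_ne_zero
  have hgradcont : Continuous gradH := by
    have hcc : Continuous (fun y => (fun k => (fderiv ℝ H y) (Pi.single k 1))) := by
      apply continuous_pi
      intro k
      exact hfdcont.clm_apply continuous_const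
    rw [funext hgrad_eq]
    exact hcc
  set G : ℝ → Fin N → ℝ := fun τ => gradH (v (t₀ + τ * h)) with hG
  have hGcont : Continuous G :=
    hgradcont.comp (hvcont.comp (continuous_const.add (continuous_id.mul continuous_const)))
  have hℓcont : ∀ i, Continuous (ℓ i) := by
    intro i
    have : (ℓ i) = fun τ => ∏ j ∈ Finset.univ.erase i, (τ - c j) / (c i - c j) :=
      funext (hℓ i)
    rw [this]
    exact continuous_finset_prod _ fun j _ =>
      (continuous_id.sub continuous_const).div_const _
  have hℓGint : ∀ i, IntervalIntegrable (fun τ => ℓ i τ • G τ) volume 0 1 :=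
    fun i => (((hℓcont i).smul hGcont)).intervalIntegrable 0 1
  -- the vector integrals u i
  set u : Fin s → (Fin N → ℝ) := fun i => ∫ τ in (0:ℝ)..1, ℓ i τ • G τ with hu
  have hu_apply : ∀ i k, u i k = ∫ τ in (0:ℝ)..1, ℓ i τ * G τ k := by
    intro i k
    simp only [hu]
    rw [intervalIntegral_pi_apply (hℓGint i) k]
    simp only [Pi.smul_apply, smul_eq_mul]
  -- rewrite the collocation integral
  have hintS : ∀ i, (∫ τ in (0:ℝ)..1, ℓ i τ • S.mulVec (G τ)) = S.mulVec (u i) := by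
    intro i
    calc (∫ τ in (0:ℝ)..1, ℓ i τ • S.mulVec (G τ))
        = ∫ τ in (0:ℝ)..1,
            (LinearMap.toContinuousLinearMap (Matrix.mulVecLin S)) (ℓ i τ • G τ) := by
          congr 1; funext τ
          simp [Matrix.mulVec_smul]
      _ = (LinearMap.toContinuousLinearMap (Matrix.mulVecLin S)) (u i) :=
          ContinuousLinearMap.intervalIntegral_comp_comm _ (hℓGint i)
      _ = S.mulVec (u i) := by simp
  -- derivative of v from the polynomials
  have hvderiv : ∀ t : ℝ, HasDerivAt v (fun k => ((P k).derivative).eval t) t := by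
    intro t
    apply hasDerivAt_pi.2
    intro k
    have : (fun t => v t k) = fun t => (P k).eval t := funext (hPeval k)
    rw [this]
    exact (P k).hasDerivAt t
  -- derivative value at collocation nodes
  have hnode : ∀ i, (fun k => ((P k).derivative).eval (t₀ + c i * h))
      = (b i)⁻¹ • S.mulVec (u i) := by
    intro i
    have h1 := hcoll i
    rw [hintS i] at h1
    exact (hvderiv (t₀ + c i * h)).unique h1
  -- derivative of the reparametrized curve
  have hReval : ∀ k τ, (R k).eval τ = h * ((P k).derivative).eval (t₀ + τ * h) := by
    intro k τ
    simp only [hRdef, hW, Polynomial.derivative_comp]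
    rw [Polynomial.eval_mul, Polynomial.eval_comp]
    simp only [Polynomial.derivative_add, Polynomial.derivative_C, Polynomial.derivative_mul,
      Polynomial.derivative_X, Polynomial.eval_add, Polynomial.eval_mul, Polynomial.eval_C,
      Polynomial.eval_X, zero_add, mul_one, mul_zero, add_zero, zero_mul]
    rw [mul_comm h τ]
  have hwderiv : ∀ τ : ℝ, HasDerivAt (fun τ => v (t₀ + τ * h)) (fun k => (R k).eval τ) τ := by
    intro τ
    apply hasDerivAt_pi.2
    intro k
    have hfe : (fun τ => v (t₀ + τ * h) k) = fun τ => (W k).eval τ := by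
      funext τ; rw [hWeval]
    rw [hfe, hRdef]
    exact (W k).hasDerivAt τ
  -- degree bound
  have hcard : ((Finset.univ : Finset (Fin s)).card : ℕ) = s := by simp
  have hRdeg : ∀ k, (R k).degree < ((Finset.univ : Finset (Fin s)).card : WithBot ℕ) := by
    intro k
    have hWdeg : (W k).natDegree ≤ s := by
      rw [hW]
      refine le_trans (Polynomial.natDegree_comp_le) ?_
      have haff : (Polynomial.C t₀ + Polynomial.C h * Polynomial.X : Polynomial ℝ).natDegree
          ≤ 1 := by
        refine le_trans (Polynomial.natDegree_add_le _ _) ?_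
        simp only [Polynomial.natDegree_C, max_le_iff]
        exact ⟨Nat.zero_le 1,
          le_trans (Polynomial.natDegree_C_mul_le h Polynomial.X) (by simp)⟩
      calc (P k).natDegree *
            (Polynomial.C t₀ + Polynomial.C h * Polynomial.X : Polynomial ℝ).natDegree
          ≤ s * 1 := Nat.mul_le_mul (hPdeg k) haff
        _ = s := by ring
    rw [hcard]
    by_cases hz : R k = 0
    · rw [hz, Polynomial.degree_zero]
      exact bot_lt_iff_ne_bot.2 (by simp)
    · have hWne : (W k).natDegree ≠ 0 := by
        intro h0
        exact hz (by rw [hRdef]; exact Polynomial.derivative_of_natDegree_zero h0)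
      have h2 : (R k).natDegree < (W k).natDegree := Polynomial.natDegree_derivative_lt hWne
      exact (Polynomial.natDegree_lt_iff_degree_lt hz).1 (lt_of_lt_of_le h2 hWdeg)
  -- Lagrange interpolation
  have hbasis : ∀ i τ, (Lagrange.basis Finset.univ c i).eval τ = ℓ i τ := by
    intro i τ
    rw [hℓ, Lagrange.basis, Polynomial.eval_prod]
    apply Finset.prod_congr rfl
    intro j _
    rw [Lagrange.basisDivisor]
    simp [div_eq_mul_inv, mul_comm]
  have hinterp : ∀ k τ, (R k).eval τ = ∑ i, ℓ i τ * (R k).eval (c i) := by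
    intro k τ
    conv_lhs => rw [Lagrange.eq_interpolate (Set.injOn_of_injective hc) (hRdeg k)]
    rw [Lagrange.interpolate_apply, Polynomial.eval_finset_sum]
    apply Finset.sum_congr rfl
    intro i _
    rw [Polynomial.eval_mul, Polynomial.eval_C, hbasis, mul_comm]
  -- values of R at nodes
  set E : Fin s → (Fin N → ℝ) := fun i => (h * (b i)⁻¹) • S.mulVec (u i) with hE
  have hRnode : ∀ i k, (R k).eval (c i) = E i k := by
    intro i k
    rw [hReval, hE]
    have hck := congrFun (hnode i) k
    rw [hck]
    simp [mul_assoc]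
  -- the derivative of the energy along the curve
  set g' : ℝ → ℝ := fun τ => G τ ⬝ᵥ (fun k => (R k).eval τ) with hg'
  have hgderiv : ∀ τ : ℝ, HasDerivAt (fun τ => H (v (t₀ + τ * h))) (g' τ) τ := by
    intro τ
    have h2 : HasFDerivAt H (fderiv ℝ H (v (t₀ + τ * h))) (v (t₀ + τ * h)) :=
      ((hH.differentiable one_ne_zero) _).hasFDerivAt
    have h3 := h2.comp_hasDerivAt τ (hwderiv τ)
    simp [hg', hG, hgradH] at h3
    exact h3
  have hRcont : ∀ k, Continuous fun τ => (R k).eval τ := fun k => (R k).continuous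
  have hg'cont : Continuous g' := by
    rw [hg']
    simp only [dotProduct]
    exact continuous_finset_sum _ fun k _ =>
      ((continuous_apply k).comp hGcont).mul (hRcont k)
  have hFTC : ∫ τ in (0:ℝ)..1, g' τ
      = H (v (t₀ + 1 * h)) - H (v (t₀ + 0 * h)) :=
    intervalIntegral.integral_eq_sub_of_hasDerivAt (fun t _ => hgderiv t)
      (hg'cont.intervalIntegrable 0 1)
  -- the integral vanishes
  have hdotcont : ∀ i, Continuous fun τ => G τ ⬝ᵥ E i := by
    intro i
    simp only [dotProduct]
    exact continuous_finset_sum _ fun k _ =>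
      ((continuous_apply k).comp hGcont).mul continuous_const
  have hint0 : ∫ τ in (0:ℝ)..1, g' τ = 0 := by
    have hsplit : ∀ τ, g' τ = ∑ i, ℓ i τ * (G τ ⬝ᵥ E i) := by
      intro τ
      rw [hg']
      simp only [dotProduct]
      calc ∑ k, G τ k * (R k).eval τ
          = ∑ k, ∑ i, ℓ i τ * (G τ k * E i k) := by
            refine Finset.sum_congr rfl fun k _ => ?_
            rw [hinterp k τ, Finset.mul_sum]
            refine Finset.sum_congr rfl fun i _ => ?_
            rw [hRnode]; ring
        _ = ∑ i, ℓ i τ * ∑ k, G τ k * E i k := by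
            rw [Finset.sum_comm]
            simp [Finset.mul_sum]
    rw [intervalIntegral.integral_congr (g := fun τ => ∑ i, ℓ i τ * (G τ ⬝ᵥ E i))
      (fun τ _ => hsplit τ)]
    rw [intervalIntegral.integral_finset_sum (f := fun i τ => ℓ i τ * (G τ ⬝ᵥ E i)) (fun i _ =>
      ((hℓcont i).mul (hdotcont i)).intervalIntegrable 0 1)]
    apply Finset.sum_eq_zero
    intro i _
    have h1 : ∀ τ, ℓ i τ * (G τ ⬝ᵥ E i) = ∑ k, (ℓ i τ * G τ k) * E i k := by
      intro τ
      simp only [dotProduct, Finset.mul_sum]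
      exact Finset.sum_congr rfl fun k _ => by ring
    calc ∫ τ in (0:ℝ)..1, ℓ i τ * (G τ ⬝ᵥ E i)
        = ∫ τ in (0:ℝ)..1, ∑ k, (ℓ i τ * G τ k) * E i k := by
          simp only [h1]
      _ = ∑ k, ∫ τ in (0:ℝ)..1, (ℓ i τ * G τ k) * E i k :=
          intervalIntegral.integral_finset_sum (fun k _ =>
            (((hℓcont i).mul ((continuous_apply k).comp hGcont)).mul
              continuous_const).intervalIntegrable 0 1)
      _ = ∑ k, (u i k) * E i k := by
          refine Finset.sum_congr rfl fun k _ => ?_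
          rw [intervalIntegral.integral_mul_const, hu_apply]
      _ = (u i) ⬝ᵥ E i := rfl
      _ = 0 := by
          rw [hE]
          rw [dotProduct_smul, skew_dot hS (u i)]
          simp
  -- energy is conserved along the collocation polynomial
  have hkey : H (v (t₀ + h)) = H (v t₀) := by
    have heq := hFTC
    rw [hint0] at heq
    have h0 : t₀ + 0 * h = t₀ := by ring
    have h1 : t₀ + 1 * h = t₀ + h := by ring
    rw [h0, h1] at heq
    linarith
  -- apply the energy constraint at both endpoints
  have hc0 : H (v t₀) = Real.exp (φ t₀) * H x₀ := by
    rw [hv0]; exact hconstraint t₀ (by simp) x₀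
  have hdiag : (Matrix.diagonal (fun k => Real.exp (Y (t₀ + h) k))).mulVec x₁ = v (t₀ + h) := by
    rw [hx1]
    funext k
    simp [Matrix.mulVec_diagonal, ← mul_assoc, ← Real.exp_add]
  have hc1 : H (v (t₀ + h)) = Real.exp (φ (t₀ + h)) * H x₁ := by
    rw [← hdiag]
    exact hconstraint (t₀ + h) (by simp) x₁
  have hfin : Real.exp (φ (t₀ + h)) * H x₁ = Real.exp (φ t₀) * H x₀ := by
    rw [← hc1, hkey, hc0]
  have hne : Real.exp (φ (t₀ + h)) ≠ 0 := Real.exp_ne_zero _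
  rw [Real.exp_sub, div_mul_eq_mul_div, eq_div_iff hne]
  linear_combination hfin
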